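/- arXiv:2205.13582 — 2 statements merged into one kernel-verified Lean document; each statement's English description precedes it below -/
import Mathlib

section
/- Let n ≥ 5, q = 2n+1, g = 2n-2, and let A be the cyclic subgroup of (Z/qZ)² generated by (1, g). Then the minimum Mannheim weight of a nonzero element of A equals 4, where the Mannheim weight of (x,y) ∈ (Z/qZ)² is |x̃| + |ỹ| with x̃, ỹ the representatives of x, y in the interval (-q/2, q/2]. -/
/-- Let `n ≥ 5`, `q = 2n+1`, `g = 2n-2`, and let `A` be the cyclic subgroup of `(ℤ/qℤ)²`
generated by `(1, g)`. Then the minimum Mannheim weight of a nonzero element of `A`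
equals `4`, where the Mannheim weight of `(x,y)` is `|x̃| + |ỹ|` with `x̃, ỹ` the
representatives in `(-q/2, q/2]` (given by `ZMod.valMinAbs`). -/
theorem stmt_6 (n : ℕ) (hn : 5 ≤ n) :
    IsLeast {w : ℤ | ∃ x : ZMod (2*n+1) × ZMod (2*n+1),
      x ∈ AddSubgroup.zmultiples
        (((1 : ZMod (2*n+1)), ((2*n-2 : ℕ) : ZMod (2*n+1))) :
          ZMod (2*n+1) × ZMod (2*n+1)) ∧
      x ≠ 0 ∧ w = |x.1.valMinAbs| + |x.2.valMinAbs|} 4 := by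
  haveI : NeZero (2*n+1) := ⟨by omega⟩
  haveI : Fact (1 < 2*n+1) := ⟨by omega⟩
  have hg : ((2*n-2 : ℕ) : ZMod (2*n+1)) = ((-3 : ℤ) : ZMod (2*n+1)) := by
    have : (((2*n-2 : ℕ) : ℤ) : ZMod (2*n+1)) = ((-3 : ℤ) : ZMod (2*n+1)) := by
      rw [ZMod.intCast_eq_intCast_iff]
      have h2 : ((2*n-2 : ℕ) : ℤ) = 2*(n:ℤ) - 2 := by omega
      rw [h2]
      exact Int.ModEq.symm (Int.modEq_iff_dvd.mpr ⟨1, by push_cast; ring⟩)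
    simpa using this
  constructor
  · refine ⟨((1 : ZMod (2*n+1)), ((2*n-2 : ℕ) : ZMod (2*n+1))),
      AddSubgroup.mem_zmultiples _, ?_, ?_⟩
    · intro h
      have h1 : (1 : ZMod (2*n+1)) = 0 := congrArg Prod.fst h
      exact one_ne_zero h1
    · have h1 : (1 : ZMod (2*n+1)).valMinAbs = 1 := by
        have := ZMod.valMinAbs_natCast_of_le_half (n := 2*n+1) (a := 1) (by omega)
        simpa using this
      have h2 : (((2*n-2 : ℕ) : ZMod (2*n+1))).valMinAbs = -3 := by
        rw [ZMod.valMinAbs_spec]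
        refine ⟨by rw [hg], ?_⟩
        simp only [Set.mem_Ioc]
        constructor <;> push_cast <;> omega
      simp [h1, h2]
  · rintro w ⟨x, hx, hx0, rfl⟩
    obtain ⟨k, hk⟩ := AddSubgroup.mem_zmultiples_iff.mp hx
    have hrel : x.2 = -3 * x.1 := by
      rw [← hk]
      show k • ((2*n-2 : ℕ) : ZMod (2*n+1)) = -3 * (k • (1 : ZMod (2*n+1)))
      rw [hg, zsmul_eq_mul, zsmul_eq_mul]
      push_cast
      ring
    set a := x.1.valMinAbs with hadef
    set b := x.2.valMinAbs with hbdef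
    have ha : (a : ZMod (2*n+1)) = x.1 := ZMod.coe_valMinAbs x.1
    have hb : (b : ZMod (2*n+1)) = x.2 := ZMod.coe_valMinAbs x.2
    have hdvd : ((2*n+1 : ℕ) : ℤ) ∣ (b + 3*a) := by
      rw [← ZMod.intCast_zmod_eq_zero_iff_dvd]
      push_cast
      rw [ha, hb, hrel]
      ring
    have haa : |a| ≤ (n : ℤ) := by
      have := ZMod.natAbs_valMinAbs_le x.1
      have h2 : (2*n+1)/2 = n := by omega
      rw [h2] at this
      rw [Int.abs_eq_natAbs]
      omega
    have hbb : |b| ≤ (n : ℤ) := by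
      have := ZMod.natAbs_valMinAbs_le x.2
      have h2 : (2*n+1)/2 = n := by omega
      rw [h2] at this
      rw [Int.abs_eq_natAbs]
      omega
    by_contra hlt
    push_neg at hlt
    have hab : |a| + |b| ≤ 3 := by omega
    have hsmall : |b + 3*a| < ((2*n+1 : ℕ) : ℤ) := by
      have h1 : |b + 3*a| ≤ |b| + 3*|a| := by
        calc |b + 3*a| ≤ |b| + |3*a| := abs_add_le _ _
        _ = |b| + 3*|a| := by rw [abs_mul]; simp
      have h2 := abs_nonneg a
      have h3 := abs_nonneg b
      push_cast
      omega
    have hz : b + 3*a = 0 := Int.eq_zero_of_abs_lt_dvd hdvd hsmall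
    have ha0 : a ≠ 0 := by
      intro h0
      have hb0 : b = 0 := by omega
      apply hx0
      have : x.1 = 0 := by rw [← ha, h0]; simp
      have h2' : x.2 = 0 := by rw [← hb, hb0]; simp
      exact Prod.ext this h2'
    have : 1 ≤ |a| := by
      rcases abs_cases a with ⟨h, _⟩ | ⟨h, _⟩ <;> omega
    have : |b| = 3 * |a| := by
      have : b = -(3*a) := by omega
      rw [this, abs_neg, abs_mul]; simp
    omega
end

section
/- Let n ≥ 3, q = 2n+1, g = 2n-2 = 3q' + r (0 ≤ r ≤ 2). Among all elements (c, d) of A = ⟨(1,g)⟩ ⊆ (Z/qZ)² whose centered representative has |c̃| = 1, the minimum Mannheim weight is exactly 4, attained by (1, -3). -/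
/-- Let `n ≥ 3`, `q = 2n+1`, `g = 2n-2`. Among all elements `(c, d)` of
`A = ⟨(1,g)⟩ ⊆ (ℤ/qℤ)²` whose centered representative has `|c̃| = 1`, the minimum
Mannheim weight is exactly `4`, attained by `(1, -3)`. -/
theorem stmt_18 (n : ℕ) (hn : 3 ≤ n) :
    IsLeast {w : ℤ | ∃ x : ZMod (2*n+1) × ZMod (2*n+1),
      x ∈ AddSubgroup.zmultiples
        (((1 : ZMod (2*n+1)), ((2*n-2 : ℕ) : ZMod (2*n+1))) :
          ZMod (2*n+1) × ZMod (2*n+1)) ∧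
      |x.1.valMinAbs| = 1 ∧ w = |x.1.valMinAbs| + |x.2.valMinAbs|} 4 ∧
    (((1 : ZMod (2*n+1)), (-3 : ZMod (2*n+1))) ∈
      AddSubgroup.zmultiples
        (((1 : ZMod (2*n+1)), ((2*n-2 : ℕ) : ZMod (2*n+1))) :
          ZMod (2*n+1) × ZMod (2*n+1))) ∧
    |(1 : ZMod (2*n+1)).valMinAbs| + |(-3 : ZMod (2*n+1)).valMinAbs| = 4 := by
  have hq : (7 : ℕ) ≤ 2*n+1 := by omega
  haveI : NeZero (2*n+1) := ⟨by omega⟩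
  have hg : ((2*n-2 : ℕ) : ZMod (2*n+1)) = -3 := by
    rw [show 2*n-2 = (2*n+1)-3 by omega, Nat.cast_sub (by omega), ZMod.natCast_self]
    push_cast; ring
  have hv : ∀ m : ℤ, |m| ≤ 3 → ((m : ZMod (2*n+1)).valMinAbs = m) := by
    intro m hm
    rw [ZMod.valMinAbs_spec]
    refine ⟨rfl, ?_, ?_⟩
    · push_cast; rw [abs_le] at hm; nlinarith
    · push_cast; rw [abs_le] at hm; nlinarith
  have hv1 : (1 : ZMod (2*n+1)).valMinAbs = 1 := by
    have := hv 1 (by norm_num); simpa using this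
  have hvm1 : (-1 : ZMod (2*n+1)).valMinAbs = -1 := by
    have := hv (-1) (by norm_num); simpa using this
  have hv3 : (3 : ZMod (2*n+1)).valMinAbs = 3 := by
    have := hv 3 (by norm_num); simpa using this
  have hvm3 : (-3 : ZMod (2*n+1)).valMinAbs = -3 := by
    have := hv (-3) (by norm_num); simpa using this
  have hmem : (((1 : ZMod (2*n+1)), (-3 : ZMod (2*n+1))) ∈
      AddSubgroup.zmultiples
        (((1 : ZMod (2*n+1)), ((2*n-2 : ℕ) : ZMod (2*n+1))) :
          ZMod (2*n+1) × ZMod (2*n+1))) := by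
    rw [hg]; exact AddSubgroup.mem_zmultiples _
  refine ⟨⟨⟨((1 : ZMod (2*n+1)), (-3 : ZMod (2*n+1))), hmem, by
      rw [hv1]; norm_num, by rw [hv1, hvm3]; norm_num⟩, ?_⟩, hmem, by
      rw [hv1, hvm3]; norm_num⟩
  rintro w ⟨x, hx, hc, hw⟩
  rw [AddSubgroup.mem_zmultiples_iff] at hx
  obtain ⟨k, hk⟩ := hx
  have hx2 : x.2 = -3 * x.1 := by
    rw [← hk]; simp [Prod.smul_def, hg, zsmul_eq_mul]; ring
  have hc' : x.1.valMinAbs = 1 ∨ x.1.valMinAbs = -1 := by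
    rcases abs_eq (by norm_num : (0:ℤ) ≤ 1) |>.mp hc with h | h
    · exact Or.inl h
    · exact Or.inr h
  have hx1 : x.1 = 1 ∨ x.1 = -1 := by
    rcases hc' with h | h
    · left; rw [← x.1.coe_valMinAbs, h]; simp
    · right; rw [← x.1.coe_valMinAbs, h]; push_cast; simp
  rcases hx1 with h | h
  · rw [hw, hc, hx2, h]
    norm_num [hvm3]
  · rw [hw, hc, hx2, h]
    norm_num [hv3]
end
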